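/- Let q ≥ 3 be an integer and Γ_q the Hecke triangle group in SL(2,ℝ). Let x, y ∈ ℝ ∪ {∞} be distinct points neither of which is cuspidal, i.e. x ∉ Γ_q • ∞ and y ∉ Γ_q • ∞. Then there exists g ∈ Γ_q such that g⁻¹ • x and g⁻¹ • y are real numbers with g⁻¹ • x > 0 > g⁻¹ • y. Moreover, if x is a positive real number, then g can be chosen so that additionally g • 0 is a nonnegative real number. -/

import Mathlib

noncomputable section

open OnePoint

abbrev SL2 := Matrix.SpecialLinearGroup (Fin 2) ℝ

/-- `S = [[0,1],[−1,0]] ∈ SL(2,ℝ)`. -/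
def Smat : SL2 := ⟨!![0, 1; -1, 0], by norm_num [Matrix.det_fin_two_of]⟩

/-- `T_q = [[1, λ_q],[0,1]] ∈ SL(2,ℝ)` where `λ_q = 2cos(π/q)`. -/
def Tmat (q : ℕ) : SL2 :=
  ⟨!![1, 2 * Real.cos (Real.pi / q); 0, 1], by norm_num [Matrix.det_fin_two_of]⟩

/-- The Hecke triangle group `Γ_q ≤ SL(2,ℝ)`, generated by `S` and `T_q`. -/
def Hecke (q : ℕ) : Subgroup SL2 := Subgroup.closure {Smat, Tmat q}

/-- The Möbius action of `SL(2,ℝ)` on `ℝ ∪ {∞}`: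
`[[a,b],[c,d]] • x = (ax+b)/(cx+d)` for `x ∈ ℝ` with `cx+d ≠ 0`, `= ∞` if `cx+d = 0`;
`[[a,b],[c,d]] • ∞ = a/c` if `c ≠ 0` and `= ∞` if `c = 0`. -/
def mob (g : SL2) (x : OnePoint ℝ) : OnePoint ℝ :=
  match x with
  | OnePoint.some r =>
      if g.1 1 0 * r + g.1 1 1 = 0 then ∞
      else (((g.1 0 0 * r + g.1 0 1) / (g.1 1 0 * r + g.1 1 1) : ℝ) : OnePoint ℝ)
  | OnePoint.infty =>
      if g.1 1 0 = 0 then ∞ else ((g.1 0 0 / g.1 1 0 : ℝ) : OnePoint ℝ)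

lemma mob_coe (g : SL2) (r : ℝ) :
    mob g (r : OnePoint ℝ) = if g.1 1 0 * r + g.1 1 1 = 0 then ∞
      else (((g.1 0 0 * r + g.1 0 1) / (g.1 1 0 * r + g.1 1 1) : ℝ) : OnePoint ℝ) := rfl

lemma mob_infty (g : SL2) :
    mob g ∞ = if g.1 1 0 = 0 then ∞ else ((g.1 0 0 / g.1 1 0 : ℝ) : OnePoint ℝ) := rfl

lemma sl2_det (g : SL2) : g.1 0 0 * g.1 1 1 - g.1 0 1 * g.1 1 0 = 1 := by
  have := g.2
  rwa [Matrix.det_fin_two] at this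

lemma mul_entry (g h : SL2) (i j : Fin 2) :
    (g * h).1 i j = g.1 i 0 * h.1 0 j + g.1 i 1 * h.1 1 j := by
  simp [Matrix.SpecialLinearGroup.coe_mul, Matrix.mul_apply, Fin.sum_univ_two]

lemma mob_coe_div (g : SL2) (n e : ℝ) (he : e ≠ 0) :
    mob g ((n/e : ℝ) : OnePoint ℝ) =
    if g.1 1 0 * n + g.1 1 1 * e = 0 then ∞
    else (((g.1 0 0 * n + g.1 0 1 * e) / (g.1 1 0 * n + g.1 1 1 * e) : ℝ) : OnePoint ℝ) := by
  rw [mob_coe]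
  have h1 : g.1 1 0 * (n/e) + g.1 1 1 = (g.1 1 0 * n + g.1 1 1 * e)/e := by field_simp
  rw [h1]
  by_cases hE : g.1 1 0 * n + g.1 1 1 * e = 0
  · rw [if_pos (by rw [hE]; simp), if_pos hE]
  · rw [if_neg (div_ne_zero hE he), if_neg hE]
    congr 1
    field_simp

lemma mob_mul (g h : SL2) (x : OnePoint ℝ) : mob (g * h) x = mob g (mob h x) := by
  induction x using OnePoint.rec with
  | infty =>
    rw [mob_infty (g*h), mul_entry, mul_entry, mob_infty h]
    by_cases hc : h.1 1 0 = 0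
    · have h00 : h.1 0 0 ≠ 0 := by
        intro h0
        have hd := sl2_det h
        rw [h0, hc] at hd; simp at hd
      rw [if_pos hc, mob_infty]
      rw [hc]
      by_cases hg : g.1 1 0 = 0
      · rw [if_pos (by rw [hg]; ring), if_pos hg]
      · rw [if_neg (by simpa using mul_ne_zero hg h00), if_neg hg]
        congr 1
        rw [mul_zero, add_zero, mul_zero, add_zero, mul_div_mul_right _ _ h00]
    · rw [if_neg hc, mob_coe_div g _ _ hc]
  | coe r =>
    have key : ∀ i : Fin 2, ((g*h).1 i 0 * r + (g*h).1 i 1)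
        = g.1 i 0 * (h.1 0 0 * r + h.1 0 1) + g.1 i 1 * (h.1 1 0 * r + h.1 1 1) := by
      intro i; rw [mul_entry, mul_entry]; ring
    rw [mob_coe (g*h) r, key 0, key 1, mob_coe h r]
    set n := h.1 0 0 * r + h.1 0 1 with hn
    set e := h.1 1 0 * r + h.1 1 1 with he
    by_cases hE : e = 0
    · have hdet : n * h.1 1 0 - h.1 0 0 * e = -1 := by
        rw [hn, he]; linear_combination (-1 : ℝ) * sl2_det h
      have hnz : n ≠ 0 := by
        intro h0; rw [h0, hE] at hdet; simp at hdet
      rw [if_pos hE, mob_infty, hE]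
      by_cases hg : g.1 1 0 = 0
      · rw [if_pos (by rw [hg]; ring), if_pos hg]
      · rw [if_neg (by simpa using mul_ne_zero hg hnz), if_neg hg]
        congr 1
        rw [mul_zero, add_zero, mul_zero, add_zero,
          mul_comm (g.1 0 0) n, mul_comm (g.1 1 0) n,
          mul_div_mul_left _ _ hnz]
    · rw [if_neg hE, mob_coe_div g _ _ hE]
lemma mob_one (x : OnePoint ℝ) : mob 1 x = x := by
  induction x using OnePoint.rec with
  | infty => rw [mob_infty]; simp
  | coe r => rw [mob_coe]; simp
lemma sin_ge_sin_aux {a b : ℝ} (ha : 0 ≤ a) (hab : a ≤ b) (hb : b ≤ Real.pi - a) :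
    Real.sin a ≤ Real.sin b := by
  rcases le_or_gt b (Real.pi/2) with h | h
  · exact Real.sin_le_sin_of_le_of_le_pi_div_two (by linarith [Real.pi_pos]) h hab
  · rw [← Real.sin_pi_sub b]
    exact Real.sin_le_sin_of_le_of_le_pi_div_two (by linarith [Real.pi_pos]) (by linarith)
      (by linarith)

def ss (q j : ℕ) : ℝ := Real.sin (j * (Real.pi / q))

section trig
variable {q : ℕ} (hq : 3 ≤ q)

lemma qposR (hq : 3 ≤ q) : (0:ℝ) < q := by
  have : (3:ℝ) ≤ q := by exact_mod_cast hq
  linarith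

lemma theta_pos (hq : 3 ≤ q) : 0 < Real.pi / q := div_pos Real.pi_pos (qposR hq)

lemma theta_lt (hq : 3 ≤ q) : Real.pi / q ≤ Real.pi / 3 := by
  apply div_le_div_of_nonneg_left Real.pi_pos.le (by norm_num)
  exact_mod_cast hq

lemma ss_zero : ss q 0 = 0 := by simp [ss]

lemma ss_q (hq : 3 ≤ q) : ss q q = 0 := by
  have : (q:ℝ) * (Real.pi / q) = Real.pi := by
    field_simp
  rw [ss, this, Real.sin_pi]

lemma ss_one_pos (hq : 3 ≤ q) : 0 < ss q 1 := by
  rw [ss]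
  push_cast
  rw [one_mul]
  exact Real.sin_pos_of_pos_of_lt_pi (theta_pos hq)
    (by have := theta_lt hq; have := Real.pi_pos; linarith)

lemma ss_nonneg (hq : 3 ≤ q) {j : ℕ} (hj : j ≤ q) : 0 ≤ ss q j := by
  apply Real.sin_nonneg_of_nonneg_of_le_pi
  · positivity
  · have h1 : (j:ℝ) ≤ q := by exact_mod_cast hj
    have h2 : (j:ℝ) * (Real.pi / q) ≤ (q:ℝ) * (Real.pi / q) := by
      apply mul_le_mul_of_nonneg_right h1 (theta_pos hq).le
    have h3 : (q:ℝ) * (Real.pi / q) = Real.pi := by field_simp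
    linarith

lemma ss_ge_one (hq : 3 ≤ q) {j : ℕ} (hj1 : 1 ≤ j) (hj2 : j ≤ q - 1) :
    ss q 1 ≤ ss q j := by
  apply sin_ge_sin_aux (by positivity)
  · push_cast
    rw [one_mul]
    apply le_mul_of_one_le_left (theta_pos hq).le
    exact_mod_cast hj1
  · have h1 : (j:ℝ) ≤ (q:ℝ) - 1 := by
      have : (j:ℝ) ≤ ((q-1 : ℕ):ℝ) := by exact_mod_cast hj2
      rw [Nat.cast_sub (by omega)] at this
      simpa using this
    have h2 : (j:ℝ) * (Real.pi / q) ≤ ((q:ℝ) - 1) * (Real.pi / q) :=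
      mul_le_mul_of_nonneg_right h1 (theta_pos hq).le
    have h3 : ((q:ℝ) - 1) * (Real.pi / q) = Real.pi - Real.pi/q := by
      field_simp
    push_cast
    rw [one_mul]
    linarith

lemma ss_pos (hq : 3 ≤ q) {j : ℕ} (hj1 : 1 ≤ j) (hj2 : j ≤ q - 1) : 0 < ss q j :=
  lt_of_lt_of_le (ss_one_pos hq) (ss_ge_one hq hj1 hj2)

lemma ss_rec (q : ℕ) (j : ℕ) :
    ss q (j+2) = 2 * Real.cos (Real.pi / q) * ss q (j+1) - ss q j := by
  rw [ss, ss, ss]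
  have e1 : ((j:ℝ)+2) * (Real.pi/q) = ((j:ℝ)+1) * (Real.pi/q) + Real.pi/q := by ring
  have e2 : (j:ℝ) * (Real.pi/q) = ((j:ℝ)+1) * (Real.pi/q) - Real.pi/q := by ring
  push_cast
  rw [e1, e2, Real.sin_add, Real.sin_sub]
  ring

lemma ss_det (q : ℕ) (hq : 3 ≤ q) (j : ℕ) :
    ss q (j+1)^2 - ss q j * ss q (j+2) = ss q 1 ^ 2 := by
  induction j with
  | zero => rw [ss_zero]; ring
  | succ n ih =>
    have r1 := ss_rec q n
    have r2 := ss_rec q (n+1)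
    have e1 : n + 1 + 1 = n + 2 := by ring
    have e2 : n + 1 + 2 = n + 3 := by ring
    rw [e1, e2] at *
    linear_combination ih - ss q (n+1) * r2 + ss q (n+2) * r1

lemma lam_pos (hq : 3 ≤ q) : 0 < 2 * Real.cos (Real.pi / q) := by
  have h1 : Real.pi / q ≤ Real.pi / 3 := theta_lt hq
  have : 0 < Real.cos (Real.pi / q) := by
    apply Real.cos_pos_of_mem_Ioo
    constructor
    · have := theta_pos hq; linarith
    · have := Real.pi_pos; linarith
  linarith

lemma ss_two (q : ℕ) : ss q 2 = 2 * Real.cos (Real.pi / q) * ss q 1 := by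
  rw [ss, ss]
  push_cast
  rw [one_mul]
  have : (2:ℝ) * (Real.pi/q) = 2 * (Real.pi/q) := by ring
  rw [this, Real.sin_two_mul]
  ring

end trig
def Nmat (q : ℕ) : ℕ → SL2
  | 0 => Tmat q
  | (j+1) => (Smat * Smat * Tmat q * Smat) * Nmat q j

lemma Smat_mem (q : ℕ) : Smat ∈ Hecke q := Subgroup.subset_closure (by simp)

lemma Tmat_mem (q : ℕ) : Tmat q ∈ Hecke q := Subgroup.subset_closure (by simp)

lemma Nmat_mem (q j : ℕ) : Nmat q j ∈ Hecke q := by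
  induction j with
  | zero => exact Tmat_mem q
  | succ n ih =>
    exact mul_mem (mul_mem (mul_mem (mul_mem (Smat_mem q) (Smat_mem q)) (Tmat_mem q))
      (Smat_mem q)) ih

lemma aux_coe (q : ℕ) :
    (Smat * Smat * Tmat q * Smat).1 = !![2 * Real.cos (Real.pi / q), -1; 1, 0] := by
  rw [Matrix.SpecialLinearGroup.coe_mul, Matrix.SpecialLinearGroup.coe_mul,
    Matrix.SpecialLinearGroup.coe_mul]
  simp only [Smat, Tmat]
  norm_num [Matrix.mul_fin_two]

lemma Nmat_coe {q : ℕ} (hq : 3 ≤ q) (j : ℕ) :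
    (Nmat q j).1 = !![ss q (j+1) / ss q 1, ss q (j+2) / ss q 1;
                      ss q j / ss q 1, ss q (j+1) / ss q 1] := by
  have h1 : ss q 1 ≠ 0 := (ss_one_pos hq).ne'
  induction j with
  | zero =>
    show (Tmat q).1 = _
    rw [Tmat]
    have e0 : ss q 0 / ss q 1 = 0 := by rw [ss_zero]; simp
    have e1 : ss q 1 / ss q 1 = 1 := div_self h1
    have e2 : ss q 2 / ss q 1 = 2 * Real.cos (Real.pi / q) := by
      rw [ss_two q]; field_simp
    rw [show (0:ℕ)+1 = 1 from rfl, show (0:ℕ)+2 = 2 from rfl, e0, e1, e2]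
  | succ n ih =>
    show ((Smat * Smat * Tmat q * Smat) * Nmat q n).1 = _
    rw [Matrix.SpecialLinearGroup.coe_mul, aux_coe, ih, Matrix.mul_fin_two]
    have r1 := ss_rec q n
    have r2 := ss_rec q (n+1)
    simp only [show n+1+1 = n+2 from rfl, show n+1+2 = n+3 from rfl] at r2 ⊢
    ext i k
    fin_cases i <;> fin_cases k <;>
      · simp only [Matrix.cons_val', Matrix.cons_val_zero, Matrix.cons_val_one,
          Matrix.head_cons, Matrix.empty_val', Matrix.cons_val_fin_one, Matrix.head_fin_const,
          Matrix.of_apply, Fin.zero_eta, Fin.mk_one]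
        field_simp
        try first
        | linear_combination r1
        | linear_combination r2
        | linear_combination -r1
        | linear_combination -r2
        | ring

lemma Tpow_coe (q m : ℕ) :
    ((Tmat q)^m).1 = !![1, m * (2 * Real.cos (Real.pi / q)); 0, 1] := by
  induction m with
  | zero => simp [Matrix.one_fin_two]
  | succ n ih =>
    rw [pow_succ, Matrix.SpecialLinearGroup.coe_mul, ih, Tmat, Matrix.mul_fin_two]
    push_cast
    norm_num
    ring

def NC (q : ℕ) (z : OnePoint ℝ) : Prop := ¬∃ g ∈ Hecke q, mob g ∞ = z

lemma mob_inv_mob (g : SL2) (z : OnePoint ℝ) : mob g⁻¹ (mob g z) = z := by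
  rw [← mob_mul, inv_mul_cancel, mob_one]

lemma mob_mob_inv (g : SL2) (z : OnePoint ℝ) : mob g (mob g⁻¹ z) = z := by
  rw [← mob_mul, mul_inv_cancel, mob_one]

lemma NC_mob {q : ℕ} {g : SL2} {z : OnePoint ℝ} (hg : g ∈ Hecke q) (hz : NC q z) :
    NC q (mob g z) := by
  rintro ⟨h, hh, hhe⟩
  exact hz ⟨g⁻¹ * h, mul_mem (inv_mem hg) hh, by rw [mob_mul, hhe, mob_inv_mob]⟩

lemma NC_ne_cusp {q : ℕ} {g : SL2} {z : OnePoint ℝ} (hg : g ∈ Hecke q) (hz : NC q z) :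
    mob g ∞ ≠ z := fun h => hz ⟨g, hg, h⟩

lemma NC_ne_infty {q : ℕ} {z : OnePoint ℝ} (hz : NC q z) : z ≠ ∞ :=
  fun h => (NC_ne_cusp (one_mem _) hz) (by rw [mob_one, h])
lemma inv_entries (g : SL2) : g⁻¹.1 = !![g.1 1 1, -g.1 0 1; -g.1 1 0, g.1 0 0] := by
  rw [Matrix.SpecialLinearGroup.SL2_inv_expl]
  ext i j
  fin_cases i <;> fin_cases j <;> rfl

lemma cusp_mul_lam (q : ℕ) (m : ℕ) :
    ∃ g ∈ Hecke q, mob g ∞ = (((m : ℝ) * (2 * Real.cos (Real.pi / q)) : ℝ) : OnePoint ℝ) := by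
  refine ⟨(Tmat q)^m * Smat, mul_mem (pow_mem (Tmat_mem q) m) (Smat_mem q), ?_⟩
  have hc : ((Tmat q)^m * Smat).1 =
      !![-(m * (2 * Real.cos (Real.pi / q))), 1; -1, 0] := by
    rw [Matrix.SpecialLinearGroup.coe_mul, Tpow_coe, Smat, Matrix.mul_fin_two]
    norm_num
  rw [mob_infty, hc]
  norm_num

lemma cusp_ratio {q : ℕ} (hq : 3 ≤ q) {j : ℕ} (hj1 : 1 ≤ j) (hj2 : j ≤ q - 1) :
    ∃ g ∈ Hecke q, mob g ∞ = ((ss q (j+1) / ss q j : ℝ) : OnePoint ℝ) := by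
  refine ⟨Nmat q j, Nmat_mem q j, ?_⟩
  have h1 : (0:ℝ) < ss q 1 := ss_one_pos hq
  have hj : (0:ℝ) < ss q j := ss_pos hq hj1 hj2
  rw [mob_infty, Nmat_coe hq]
  have hC : (!![ss q (j+1) / ss q 1, ss q (j+2) / ss q 1;
      ss q j / ss q 1, ss q (j+1) / ss q 1] : Matrix (Fin 2) (Fin 2) ℝ) 1 0
      = ss q j / ss q 1 := by simp
  rw [if_neg (by rw [hC]; positivity)]
  congr 1
  rw [hC]
  have hA : (!![ss q (j+1) / ss q 1, ss q (j+2) / ss q 1;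
      ss q j / ss q 1, ss q (j+1) / ss q 1] : Matrix (Fin 2) (Fin 2) ℝ) 0 0
      = ss q (j+1) / ss q 1 := by simp
  rw [hA, div_div_div_cancel_right₀]
  exact h1.ne'

lemma choose_digit {q : ℕ} (hq : 3 ≤ q) {t : ℝ} (hnc : NC q (t : OnePoint ℝ)) (ht : 0 < t)
    (hlt : t * ss q 1 < ss q 2) :
    ∃ j, 1 ≤ j ∧ j ≤ q - 2 ∧ ss q (j+2) < t * ss q (j+1) ∧ t * ss q j < ss q (j+1) := by
  have main : ∀ d i, 1 ≤ i → i + d = q - 2 → t * ss q i < ss q (i+1) →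
      ∃ j, 1 ≤ j ∧ j ≤ q - 2 ∧ ss q (j+2) < t * ss q (j+1) ∧ t * ss q j < ss q (j+1) := by
    intro d
    induction d with
    | zero =>
      intro i h1 h2 h3
      refine ⟨i, h1, by omega, ?_, h3⟩
      have : i + 2 = q := by omega
      rw [this, ss_q hq]
      have : 0 < ss q (i+1) := ss_pos hq (by omega) (by omega)
      positivity
    | succ n ih =>
      intro i h1 h2 h3
      rcases lt_trichotomy (t * ss q (i+1)) (ss q (i+2)) with h | h | h
      · exact ih (i+1) (by omega) (by omega) h
      · exfalso
        have hp : (0:ℝ) < ss q (i+1) := ss_pos hq (by omega) (by omega)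
        have : t = ss q (i+2) / ss q (i+1) := by
          rw [eq_div_iff hp.ne']; linarith
        obtain ⟨g, hg, hge⟩ := cusp_ratio hq (j := i+1) (by omega) (by omega)
        exact hnc ⟨g, hg, by rw [hge, this]⟩
      · exact ⟨i, h1, by omega, h, h3⟩
  exact main (q - 2 - 1) 1 le_rfl (by omega) hlt
set_option maxHeartbeats 1600000
lemma roundH {q : ℕ} (hq : 3 ≤ q) {t : ℝ} (ht : 0 < t) (hnc : NC q (t : OnePoint ℝ)) :
    ∃ h ∈ Hecke q, ∃ u : ℝ, 0 < u ∧ NC q (u : OnePoint ℝ) ∧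
      mob h⁻¹ (t : OnePoint ℝ) = (u : OnePoint ℝ) ∧
      1 ≤ h.1 0 0 ∧ 0 ≤ h.1 0 1 ∧ 1 ≤ h.1 1 0 ∧ 1 ≤ h.1 1 1 ∧
      h.1 0 1 < t * h.1 1 1 ∧ h.1 1 0 * t < h.1 0 0 := by
  set L : ℝ := 2 * Real.cos (Real.pi / q) with hL
  have hLpos : 0 < L := lam_pos hq
  have h1 : (0:ℝ) < ss q 1 := ss_one_pos hq
  set m : ℕ := ⌊t / L⌋₊ with hm
  have hm1 : (m:ℝ) * L ≤ t := by
    have := Nat.floor_le (by positivity : 0 ≤ t / L)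
    calc (m:ℝ) * L ≤ (t/L) * L := by nlinarith
    _ = t := by field_simp
  have hm2 : t < ((m:ℝ) + 1) * L := by
    have := Nat.lt_floor_add_one (t / L)
    calc t = (t/L)*L := by field_simp
    _ < ((m:ℝ)+1)*L := by nlinarith
  set t₁ : ℝ := t - m * L with ht₁
  have ht₁nz : t₁ ≠ 0 := by
    intro h0
    obtain ⟨g, hg, hge⟩ := cusp_mul_lam q m
    apply hnc ⟨g, hg, ?_⟩
    rw [hge]
    congr 1
    rw [← hL]
    linarith [ht₁ ▸ h0]
  have ht₁pos : 0 < t₁ := lt_of_le_of_ne (by linarith) (Ne.symm ht₁nz)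
  have ht₁lt : t₁ < L := by rw [ht₁]; push_cast at hm2 ⊢; linarith
  -- t₁ is noncuspidal
  have hTm : ((Tmat q)^m)⁻¹.1 = !![1, -(m*L); 0, 1] := by
    rw [inv_entries, Tpow_coe]
    norm_num [hL]
  have hmobT : mob ((Tmat q)^m)⁻¹ (t : OnePoint ℝ) = (t₁ : OnePoint ℝ) := by
    rw [mob_coe, hTm]
    norm_num
    rw [ht₁]; ring
  have hnc₁ : NC q (t₁ : OnePoint ℝ) := by
    rw [← hmobT]
    exact NC_mob (inv_mem (pow_mem (Tmat_mem q) m)) hnc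
  obtain ⟨j, hj1, hj2, hd1, hd2⟩ := choose_digit hq hnc₁ ht₁pos
    (by rw [ss_two q, ← hL]; nlinarith)
  set A := ss q (j+1) / ss q 1 with hA
  set B := ss q (j+2) / ss q 1 with hB
  set C := ss q j / ss q 1 with hC
  have hApos : 1 ≤ A := (one_le_div h1).2 (ss_ge_one hq (by omega) (by omega))
  have hCpos : 1 ≤ C := (one_le_div h1).2 (ss_ge_one hq hj1 (by omega))
  have hBpos : 0 ≤ B := div_nonneg (ss_nonneg hq (by omega)) h1.le
  refine ⟨(Tmat q)^m * Nmat q j,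
    mul_mem (pow_mem (Tmat_mem q) m) (Nmat_mem q j), ?_⟩
  have hcoe : ((Tmat q)^m * Nmat q j).1 = !![A + m*L*C, B + m*L*A; C, A] := by
    rw [Matrix.SpecialLinearGroup.coe_mul, Tpow_coe, Nmat_coe hq, Matrix.mul_fin_two, ← hL]
    norm_num [← hA, ← hB, ← hC]
    try ring_nf
  have e00 : ((Tmat q)^m * Nmat q j).1 0 0 = A + m*L*C := by rw [hcoe]; simp
  have e01 : ((Tmat q)^m * Nmat q j).1 0 1 = B + m*L*A := by rw [hcoe]; simp
  have e10 : ((Tmat q)^m * Nmat q j).1 1 0 = C := by rw [hcoe]; simp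
  have e11 : ((Tmat q)^m * Nmat q j).1 1 1 = A := by rw [hcoe]; simp
  have hmLnn : (0:ℝ) ≤ m*L := by positivity
  -- the new value u
  have hNinv : (Nmat q j)⁻¹.1 = !![A, -B; -C, A] := by
    rw [inv_entries, Nmat_coe hq]
    norm_num [← hA, ← hB, ← hC]
  have hdenpos : 0 < -C*t₁ + A := by
    have : C * t₁ < A := by
      rw [hC, hA, div_mul_eq_mul_div, div_lt_div_iff₀ h1 h1]
      nlinarith
    linarith
  have hnumpos : 0 < A*t₁ - B := by
    rw [hA, hB, div_mul_eq_mul_div, sub_pos, div_lt_div_iff₀ h1 h1]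
    nlinarith
  set u : ℝ := (A*t₁ - B)/(-C*t₁ + A) with hu
  have hupos : 0 < u := div_pos hnumpos hdenpos
  have n00 : (Nmat q j)⁻¹.1 0 0 = A := by rw [hNinv]; simp
  have n01 : (Nmat q j)⁻¹.1 0 1 = -B := by rw [hNinv]; simp
  have n10 : (Nmat q j)⁻¹.1 1 0 = -C := by rw [hNinv]; simp
  have n11 : (Nmat q j)⁻¹.1 1 1 = A := by rw [hNinv]; simp
  have hmobu : mob ((Tmat q)^m * Nmat q j)⁻¹ (t : OnePoint ℝ) = (u : OnePoint ℝ) := by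
    rw [mul_inv_rev, mob_mul, hmobT, mob_coe, n00, n01, n10, n11]
    rw [if_neg (by exact hdenpos.ne')]
    have heq : (A*t₁ + -B)/(-C*t₁+A) = u := by rw [hu]; ring_nf
    rw [heq]
  have hncu : NC q (u : OnePoint ℝ) := by
    rw [← hmobu]
    exact NC_mob (inv_mem (mul_mem (pow_mem (Tmat_mem q) m) (Nmat_mem q j))) hnc
  refine ⟨u, hupos, hncu, hmobu, ?_, ?_, ?_, ?_, ?_, ?_⟩
  · rw [e00]; nlinarith
  · rw [e01]; nlinarith
  · rw [e10]; exact hCpos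
  · rw [e11]; exact hApos
  · rw [e01, e11]
    have hBlt : B < t₁ * A := by
      rw [hB, hA, ← mul_div_assoc, div_lt_div_iff₀ h1 h1]
      nlinarith
    nlinarith
  · rw [e10, e00]
    have : C * t₁ < A := by
      rw [hC, hA, div_mul_eq_mul_div, div_lt_div_iff₀ h1 h1]
      nlinarith
    nlinarith
lemma engine {q : ℕ} (hq : 3 ≤ q) {x : ℝ} (hx : 0 < x) (hnc : NC q (x : OnePoint ℝ)) :
    ∀ n : ℕ, ∃ g ∈ Hecke q, ∃ t : ℝ, 0 < t ∧ mob g⁻¹ (x : OnePoint ℝ) = (t : OnePoint ℝ) ∧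
      0 ≤ g.1 0 0 ∧ 0 ≤ g.1 0 1 ∧ 0 ≤ g.1 1 0 ∧ 1 ≤ g.1 1 1 ∧ (n:ℝ) ≤ g.1 1 0 ∧
      g.1 0 1 < x * g.1 1 1 ∧ g.1 1 0 * x < g.1 0 0 := by
  intro n
  induction n with
  | zero =>
    refine ⟨1, one_mem _, x, hx, by rw [inv_one, mob_one], ?_⟩
    have h00 : (1 : SL2).1 0 0 = 1 := by simp
    have h01 : (1 : SL2).1 0 1 = 0 := by simp
    have h10 : (1 : SL2).1 1 0 = 0 := by simp
    have h11 : (1 : SL2).1 1 1 = 1 := by simp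
    rw [h00, h01, h10, h11]
    norm_num [hx]
  | succ n ih =>
    obtain ⟨g, hg, t, htpos, hmt, ha, hb, hc, hd, hcn, hbd, hca⟩ := ih
    have htnc : NC q (t : OnePoint ℝ) := by
      rw [← hmt]; exact NC_mob (inv_mem hg) hnc
    obtain ⟨h, hh, u, hu, hunc, hmu, hα, hβ, hγ, hδ, hβδ, hγα⟩ := roundH hq htpos htnc
    refine ⟨g * h, mul_mem hg hh, u, hu, ?_, ?_, ?_, ?_, ?_, ?_, ?_, ?_⟩
    · rw [mul_inv_rev, mob_mul, hmt, hmu]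
    · rw [mul_entry]; nlinarith
    · rw [mul_entry]; nlinarith
    · rw [mul_entry]; nlinarith
    · rw [mul_entry]; nlinarith
    · rw [mul_entry]; push_cast; nlinarith
    · -- betweenness left : (gh)01 < x * (gh)11
      have hden : 0 < g.1 1 0 * t + g.1 1 1 := by nlinarith
      have hxe : g.1 0 0 * t + g.1 0 1 = x * (g.1 1 0 * t + g.1 1 1) := by
        have h1 : mob g (t : OnePoint ℝ) = (x : OnePoint ℝ) := by
          rw [← hmt, mob_mob_inv]
        rw [mob_coe, if_neg hden.ne'] at h1
        have h2 := OnePoint.coe_eq_coe.1 h1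
        field_simp at h2
        linarith [h2]
      rw [mul_entry, mul_entry]
      have key : (g.1 1 0 * t + g.1 1 1) *
          (x * (g.1 1 0 * h.1 0 1 + g.1 1 1 * h.1 1 1)
            - (g.1 0 0 * h.1 0 1 + g.1 0 1 * h.1 1 1))
          = (t * h.1 1 1 - h.1 0 1) * (g.1 0 0 * g.1 1 1 - g.1 0 1 * g.1 1 0) := by
        linear_combination (-(g.1 1 0 * h.1 0 1 + g.1 1 1 * h.1 1 1)) * hxe
      rw [sl2_det g, mul_one] at key
      have h3 : 0 < (g.1 1 0 * t + g.1 1 1) *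
          (x * (g.1 1 0 * h.1 0 1 + g.1 1 1 * h.1 1 1)
            - (g.1 0 0 * h.1 0 1 + g.1 0 1 * h.1 1 1)) := by
        rw [key]; linarith
      rcases mul_pos_iff.1 h3 with ⟨_, h4⟩ | ⟨h4, _⟩ <;> linarith
    · -- betweenness right : (gh)10 * x < (gh)00
      have hden : 0 < g.1 1 0 * t + g.1 1 1 := by nlinarith
      have hxe : g.1 0 0 * t + g.1 0 1 = x * (g.1 1 0 * t + g.1 1 1) := by
        have h1 : mob g (t : OnePoint ℝ) = (x : OnePoint ℝ) := by
          rw [← hmt, mob_mob_inv]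
        rw [mob_coe, if_neg hden.ne'] at h1
        have h2 := OnePoint.coe_eq_coe.1 h1
        field_simp at h2
        linarith [h2]
      rw [mul_entry, mul_entry]
      have key : (g.1 1 0 * t + g.1 1 1) *
          ((g.1 0 0 * h.1 0 0 + g.1 0 1 * h.1 1 0)
            - x * (g.1 1 0 * h.1 0 0 + g.1 1 1 * h.1 1 0))
          = (h.1 0 0 - h.1 1 0 * t) * (g.1 0 0 * g.1 1 1 - g.1 0 1 * g.1 1 0) := by
        linear_combination (g.1 1 0 * h.1 0 0 + g.1 1 1 * h.1 1 0) * hxe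
      rw [sl2_det g, mul_one] at key
      have h3 : 0 < (g.1 1 0 * t + g.1 1 1) *
          ((g.1 0 0 * h.1 0 0 + g.1 0 1 * h.1 1 0)
            - x * (g.1 1 0 * h.1 0 0 + g.1 1 1 * h.1 1 0)) := by
        rw [key]; linarith
      rcases mul_pos_iff.1 h3 with ⟨_, h4⟩ | ⟨h4, _⟩ <;> linarith
lemma cusp_zero (q : ℕ) : ∃ g ∈ Hecke q, mob g ∞ = ((0:ℝ) : OnePoint ℝ) := by
  refine ⟨Smat, Smat_mem q, ?_⟩
  rw [mob_infty]
  norm_num [Smat]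

lemma NC_ne_zero {q : ℕ} {z : OnePoint ℝ} (hz : NC q z) : z ≠ ((0:ℝ) : OnePoint ℝ) := by
  intro h
  obtain ⟨g, hg, hge⟩ := cusp_zero q
  exact hz ⟨g, hg, by rw [hge, h]⟩

lemma separate {q : ℕ} (hq : 3 ≤ q) {ξ η : ℝ} (hξ : 0 < ξ) (hη : 0 < η) (hne : ξ ≠ η)
    (hncx : NC q (ξ : OnePoint ℝ)) (hncy : NC q (η : OnePoint ℝ)) :
    ∃ g ∈ Hecke q, ∃ a b : ℝ,
      mob g⁻¹ (ξ : OnePoint ℝ) = (a : OnePoint ℝ) ∧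
      mob g⁻¹ (η : OnePoint ℝ) = (b : OnePoint ℝ) ∧ 0 < a ∧ b < 0 ∧
      ∃ c : ℝ, mob g ((0:ℝ) : OnePoint ℝ) = (c : OnePoint ℝ) ∧ 0 ≤ c := by
  have hd : 0 < |ξ - η| := abs_pos.2 (sub_ne_zero.2 hne)
  obtain ⟨n₀, hn₀⟩ := exists_nat_gt (1 / |ξ - η|)
  set n : ℕ := n₀ + 1 with hn
  have hnR : 1 / |ξ - η| < (n:ℝ) := by rw [hn]; push_cast; linarith
  have hinv : 1 < (n:ℝ) * |ξ - η| := by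
    rw [div_lt_iff₀ hd] at hnR
    linarith
  obtain ⟨g, hg, t, htpos, hmt, hA, hB, hC, hD, hCn, hBD, hCA⟩ := engine hq hξ hncx n
  set A := g.1 0 0
  set B := g.1 0 1
  set C := g.1 1 0
  set D := g.1 1 1
  have hdet : A * D - B * C = 1 := sl2_det g
  have hC1 : (1:ℝ) ≤ C := le_trans (by rw [hn]; push_cast; linarith) hCn
  -- dichotomy
  have hdich : D * η < B ∨ A < C * η := by
    by_contra hcon
    push_neg at hcon
    obtain ⟨h1, h2⟩ := hcon
    rcases lt_or_gt_of_ne hne with hlt | hgt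
    · have habs : |ξ - η| = η - ξ := by rw [abs_of_neg (by linarith)]; ring
      rw [habs] at hinv
      have k1 : (n:ℝ) * (η - ξ) ≤ C * D * (η - ξ) := by nlinarith
      have k2 : C * D * (η - ξ) < A * D - B * C := by nlinarith
      linarith
    · have habs : |ξ - η| = ξ - η := abs_of_pos (by linarith)
      rw [habs] at hinv
      have k1 : (n:ℝ) * (ξ - η) ≤ C * D * (ξ - η) := by nlinarith
      have k2 : C * D * (ξ - η) < A * D - B * C := by nlinarith
      linarith
  have i00 : g⁻¹.1 0 0 = D := by rw [inv_entries]; simp; rfl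
  have i01 : g⁻¹.1 0 1 = -B := by rw [inv_entries]; simp; rfl
  have i10 : g⁻¹.1 1 0 = -C := by rw [inv_entries]; simp; rfl
  have i11 : g⁻¹.1 1 1 = A := by rw [inv_entries]; simp; rfl
  have hc : mob g ((0:ℝ) : OnePoint ℝ) = ((B / D : ℝ) : OnePoint ℝ) := by
    rw [mob_coe]
    rw [if_neg (by intro h0; nlinarith [h0])]
    congr 1
    rw [mul_zero, zero_add, mul_zero, zero_add]
  have hcnn : 0 ≤ B / D := div_nonneg hB (by linarith)
  rcases hdich with hcase | hcase
  · -- η < B/D : denominator A - Cη > 0, numerator Dη - B < 0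
    have hden : 0 < -C * η + A := by nlinarith
    have hmobη : mob g⁻¹ (η : OnePoint ℝ) = (((D * η - B) / (-C * η + A) : ℝ) : OnePoint ℝ) := by
      rw [mob_coe, i00, i01, i10, i11, if_neg hden.ne']
      have hee : D * η + -B = D * η - B := by ring
      rw [hee]
    have hnum : D * η - B < 0 := by nlinarith
    exact ⟨g, hg, t, (D * η - B) / (-C * η + A), hmt, hmobη, htpos,
      div_neg_of_neg_of_pos hnum hden, B / D, hc, hcnn⟩
  · -- η > A/C : denominator A - Cη < 0, numerator Dη - B > 0
    have hden : -C * η + A < 0 := by nlinarith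
    have hmobη : mob g⁻¹ (η : OnePoint ℝ) = (((D * η - B) / (-C * η + A) : ℝ) : OnePoint ℝ) := by
      rw [mob_coe, i00, i01, i10, i11, if_neg hden.ne]
      have hee : D * η + -B = D * η - B := by ring
      rw [hee]
    have hnum : 0 < D * η - B := by nlinarith
    exact ⟨g, hg, t, (D * η - B) / (-C * η + A), hmt, hmobη, htpos,
      div_neg_of_pos_of_neg hnum hden, B / D, hc, hcnn⟩
lemma mob_S (ρ : ℝ) (hρ : ρ ≠ 0) :
    mob Smat (ρ : OnePoint ℝ) = ((-1/ρ : ℝ) : OnePoint ℝ) := by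
  have e00 : Smat.1 0 0 = 0 := by norm_num [Smat]
  have e01 : Smat.1 0 1 = 1 := by norm_num [Smat]
  have e10 : Smat.1 1 0 = -1 := by norm_num [Smat]
  have e11 : Smat.1 1 1 = 0 := by norm_num [Smat]
  rw [mob_coe, e00, e01, e10, e11]
  rw [if_neg (by intro h0; apply hρ; linarith)]
  congr 1
  field_simp
  rw [div_eq_iff (by simpa using hρ)]; ring

lemma mob_S_inv (ρ : ℝ) (hρ : ρ ≠ 0) :
    mob Smat⁻¹ (ρ : OnePoint ℝ) = ((-1/ρ : ℝ) : OnePoint ℝ) := by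
  have e00 : Smat⁻¹.1 0 0 = 0 := by rw [inv_entries]; norm_num [Smat]
  have e01 : Smat⁻¹.1 0 1 = -1 := by rw [inv_entries]; norm_num [Smat]
  have e10 : Smat⁻¹.1 1 0 = 1 := by rw [inv_entries]; norm_num [Smat]
  have e11 : Smat⁻¹.1 1 1 = 0 := by rw [inv_entries]; norm_num [Smat]
  rw [mob_coe, e00, e01, e10, e11]
  rw [if_neg (by intro h0; apply hρ; linarith)]
  congr 1
  field_simp
  rw [div_eq_iff (by simpa using hρ)]; ring

theorem stmt_13' (q : ℕ) (hq : 3 ≤ q) (x y : OnePoint ℝ) (hxy : x ≠ y)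
    (hx : ¬∃ g ∈ Hecke q, mob g ∞ = x) (hy : ¬∃ g ∈ Hecke q, mob g ∞ = y) :
    (∃ g ∈ Hecke q, ∃ a b : ℝ,
      mob g⁻¹ x = (a : OnePoint ℝ) ∧ mob g⁻¹ y = (b : OnePoint ℝ) ∧ a > 0 ∧ 0 > b) ∧
    (∀ r : ℝ, x = (r : OnePoint ℝ) → 0 < r →
      ∃ g ∈ Hecke q, ∃ a b c : ℝ,
        mob g⁻¹ x = (a : OnePoint ℝ) ∧ mob g⁻¹ y = (b : OnePoint ℝ) ∧ a > 0 ∧ 0 > b ∧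
        mob g ((0 : ℝ) : OnePoint ℝ) = (c : OnePoint ℝ) ∧ 0 ≤ c) := by
  have hncx : NC q x := hx
  have hncy : NC q y := hy
  obtain ⟨ξ, rfl⟩ : ∃ ξ : ℝ, x = (ξ : OnePoint ℝ) := by
    induction x using OnePoint.rec with
    | infty => exact absurd rfl (NC_ne_infty hncx)
    | coe r => exact ⟨r, rfl⟩
  obtain ⟨η, rfl⟩ : ∃ η : ℝ, y = (η : OnePoint ℝ) := by
    induction y using OnePoint.rec with
    | infty => exact absurd rfl (NC_ne_infty hncy)
    | coe r => exact ⟨r, rfl⟩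
  have hξ0 : ξ ≠ 0 := fun h => (NC_ne_zero hncx) (by rw [h])
  have hη0 : η ≠ 0 := fun h => (NC_ne_zero hncy) (by rw [h])
  have hne : ξ ≠ η := fun h => hxy (by rw [h])
  constructor
  · -- part 1
    rcases lt_or_gt_of_ne hξ0 with hξneg | hξpos
    · rcases lt_or_gt_of_ne hη0 with hηneg | hηpos
      · -- both negative : conjugate by S and use separate
        have hξ' : 0 < -1/ξ := div_pos_of_neg_of_neg (by norm_num) hξneg
        have hη' : 0 < -1/η := div_pos_of_neg_of_neg (by norm_num) hηneg
        have hne' : -1/ξ ≠ -1/η := by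
          intro h
          apply hne
          field_simp at h
          linarith
        have hncx' : NC q ((-1/ξ : ℝ) : OnePoint ℝ) := by
          rw [← mob_S ξ hξ0]
          exact NC_mob (Smat_mem q) hncx
        have hncy' : NC q ((-1/η : ℝ) : OnePoint ℝ) := by
          rw [← mob_S η hη0]
          exact NC_mob (Smat_mem q) hncy
        obtain ⟨g₁, hg₁, a, b, hma, hmb, hapos, hbneg, -⟩ :=
          separate hq hξ' hη' hne' hncx' hncy'
        refine ⟨Smat⁻¹ * g₁, mul_mem (inv_mem (Smat_mem q)) hg₁, a, b, ?_, ?_, hapos, hbneg⟩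
        · rw [mul_inv_rev, inv_inv, mob_mul, mob_S ξ hξ0, hma]
        · rw [mul_inv_rev, inv_inv, mob_mul, mob_S η hη0, hmb]
      · -- ξ < 0 < η : use S
        refine ⟨Smat, Smat_mem q, -1/ξ, -1/η, mob_S_inv ξ hξ0, mob_S_inv η hη0,
          div_pos_of_neg_of_neg (by norm_num) hξneg, ?_⟩
        have : -1/η < 0 := div_neg_of_neg_of_pos (by norm_num) hηpos
        linarith
    · rcases lt_or_gt_of_ne hη0 with hηneg | hηpos
      · -- ξ > 0 > η : identity
        exact ⟨1, one_mem _, ξ, η, by rw [inv_one, mob_one], by rw [inv_one, mob_one],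
          hξpos, hηneg⟩
      · -- both positive
        obtain ⟨g, hg, a, b, hma, hmb, hapos, hbneg, -⟩ :=
          separate hq hξpos hηpos hne hncx hncy
        exact ⟨g, hg, a, b, hma, hmb, hapos, hbneg⟩
  · -- part 2
    intro r hr hrpos
    have hξr : ξ = r := OnePoint.coe_eq_coe.1 hr
    subst hξr
    rcases lt_or_gt_of_ne hη0 with hηneg | hηpos
    · refine ⟨1, one_mem _, ξ, η, 0, by rw [inv_one, mob_one], by rw [inv_one, mob_one],
        hrpos, hηneg, ?_, le_refl 0⟩
      rw [mob_one]
    · obtain ⟨g, hg, a, b, hma, hmb, hapos, hbneg, c, hmc, hcnn⟩ :=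
        separate hq hrpos hηpos hne hncx hncy
      exact ⟨g, hg, a, b, c, hma, hmb, hapos, hbneg, hmc, hcnn⟩

/-- for distinct non-cuspidal points `x, y ∈ ℝ ∪ {∞}` of `Γ_q` there is
`g ∈ Γ_q` with `g⁻¹ • x > 0 > g⁻¹ • y` (both real); moreover if `x` is a positive real
number then `g` can be chosen with `g • 0` a nonnegative real number as well. -/
theorem stmt_13 (q : ℕ) (hq : 3 ≤ q) (x y : OnePoint ℝ) (hxy : x ≠ y)
    (hx : ¬∃ g ∈ Hecke q, mob g ∞ = x) (hy : ¬∃ g ∈ Hecke q, mob g ∞ = y) :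
    (∃ g ∈ Hecke q, ∃ a b : ℝ,
      mob g⁻¹ x = (a : OnePoint ℝ) ∧ mob g⁻¹ y = (b : OnePoint ℝ) ∧ a > 0 ∧ 0 > b) ∧
    (∀ r : ℝ, x = (r : OnePoint ℝ) → 0 < r →
      ∃ g ∈ Hecke q, ∃ a b c : ℝ,
        mob g⁻¹ x = (a : OnePoint ℝ) ∧ mob g⁻¹ y = (b : OnePoint ℝ) ∧ a > 0 ∧ 0 > b ∧
        mob g ((0 : ℝ) : OnePoint ℝ) = (c : OnePoint ℝ) ∧ 0 ≤ c) :=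
  stmt_13' q hq x y hxy hx hy
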